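/- Let k, ℓ ≥ 1. Every oriented graph with no directed triangle, no TT3, and no induced S_{k,ℓ} has chromatic number at most 2k + 2ℓ - 2. -/

import Mathlib

/-- The underlying simple graph of a digraph given by its arc relation. -/
def underlying {V : Type*} (A : V → V → Prop) : SimpleGraph V where
  Adj x y := x ≠ y ∧ (A x y ∨ A y x)
  symm := by constructor; intro x y h; exact ⟨h.1.symm, h.2.symm⟩
  loopless := by constructor; intro x h; exact h.1 rfl

section Aux

variable {V : Type*} [DecidableEq V]

/-- Greedy/degeneracy coloring on a finite vertex subset. -/
lemma degeneracy_coloring (G : SimpleGraph V) [DecidableRel G.Adj] (d : ℕ)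
    (s : Finset V)
    (h : ∀ t ⊆ s, t.Nonempty → ∃ v ∈ t, (t.filter (G.Adj v)).card ≤ d) :
    ∃ c : V → ℕ, (∀ x ∈ s, c x < d + 1) ∧
      ∀ x ∈ s, ∀ y ∈ s, G.Adj x y → c x ≠ c y := by
  induction s using Finset.strongInduction with
  | _ s ih =>
    rcases s.eq_empty_or_nonempty with rfl | hs
    · exact ⟨fun _ => 0, by simp, by simp⟩
    · obtain ⟨v, hv, hdeg⟩ := h s (subset_refl s) hs
      obtain ⟨c, hc1, hc2⟩ := ih (s.erase v) (Finset.erase_ssubset hv)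
        (fun t ht htne => h t (ht.trans (Finset.erase_subset _ _)) htne)
      have himg : (((s.erase v).filter (G.Adj v)).image c).card ≤ d := by
        refine le_trans Finset.card_image_le (le_trans (Finset.card_le_card ?_) hdeg)
        exact Finset.filter_subset_filter _ (Finset.erase_subset _ _)
      have hex : ∃ n ∈ Finset.range (d + 1),
          n ∉ ((s.erase v).filter (G.Adj v)).image c := by
        by_contra hcon
        push_neg at hcon
        have := Finset.card_le_card (fun n hn => hcon n hn)
        rw [Finset.card_range] at this
        omega
      obtain ⟨n, hn1, hn2⟩ := hex
      rw [Finset.mem_range] at hn1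
      refine ⟨Function.update c v n, ?_, ?_⟩
      · intro x hx
        by_cases hxv : x = v
        · rw [hxv, Function.update_self]; exact hn1
        · rw [Function.update_of_ne hxv]
          exact hc1 x (Finset.mem_erase.2 ⟨hxv, hx⟩)
      · intro x hx y hy hadj
        by_cases hxv : x = v
        · have hadj' : G.Adj v y := hxv ▸ hadj
          have hyv : y ≠ v := fun h => G.loopless.irrefl v (h ▸ hadj')
          rw [hxv, Function.update_self, Function.update_of_ne hyv]
          intro heq
          exact hn2 (Finset.mem_image.2 ⟨y, Finset.mem_filter.2
            ⟨Finset.mem_erase.2 ⟨hyv, hy⟩, hadj'⟩, heq.symm⟩)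
        · by_cases hyv : y = v
          · have hadj' : G.Adj v x := hyv ▸ hadj.symm
            rw [Function.update_of_ne hxv, hyv, Function.update_self]
            intro heq
            exact hn2 (Finset.mem_image.2 ⟨x, Finset.mem_filter.2
              ⟨Finset.mem_erase.2 ⟨hxv, hx⟩, hadj'⟩, heq⟩)
          · rw [Function.update_of_ne hxv, Function.update_of_ne hyv]
            exact hc2 x (Finset.mem_erase.2 ⟨hxv, hx⟩) y (Finset.mem_erase.2 ⟨hyv, hy⟩) hadj

lemma aux_sum_eq (A : V → V → Prop) [DecidableRel A] (t : Finset V) :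
    ∑ v ∈ t, (t.filter (fun u => A v u)).card = ∑ v ∈ t, (t.filter (fun u => A u v)).card := by
  simp only [Finset.card_filter]
  rw [Finset.sum_comm]

lemma deg_le_in_add_out (A : V → V → Prop) [DecidableRel A]
    [DecidableRel (underlying A).Adj] (t : Finset V) (v : V) :
    (t.filter ((underlying A).Adj v)).card ≤
      (t.filter (fun u => A v u)).card + (t.filter (fun u => A u v)).card := by
  refine le_trans (Finset.card_le_card ?_) (Finset.card_union_le _ _)
  intro u hu
  simp only [Finset.mem_filter, Finset.mem_union] at *
  obtain ⟨hut, _, h⟩ := hu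
  tauto

lemma aux_lowdeg_in (A : V → V → Prop) [DecidableRel A]
    [DecidableRel (underlying A).Adj] (t : Finset V) (ht : t.Nonempty) (d : ℕ)
    (hin : ∀ v ∈ t, (t.filter (fun u => A u v)).card ≤ d) :
    ∃ v ∈ t, (t.filter ((underlying A).Adj v)).card ≤ 2 * d := by
  by_contra hcon
  push_neg at hcon
  have hsum : (2 * d + 1) * t.card ≤ ∑ v ∈ t, (t.filter ((underlying A).Adj v)).card := by
    calc (2 * d + 1) * t.card = ∑ _v ∈ t, (2 * d + 1) := by
          rw [Finset.sum_const, smul_eq_mul, mul_comm]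
      _ ≤ _ := Finset.sum_le_sum (fun v hv => hcon v hv)
  have hsum2 : ∑ v ∈ t, (t.filter ((underlying A).Adj v)).card ≤ 2 * d * t.card := by
    calc ∑ v ∈ t, (t.filter ((underlying A).Adj v)).card
        ≤ ∑ v ∈ t, ((t.filter (fun u => A v u)).card + (t.filter (fun u => A u v)).card) :=
          Finset.sum_le_sum (fun v _ => deg_le_in_add_out A t v)
      _ = ∑ v ∈ t, (t.filter (fun u => A u v)).card
            + ∑ v ∈ t, (t.filter (fun u => A u v)).card := by
          rw [Finset.sum_add_distrib, aux_sum_eq]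
      _ ≤ d * t.card + d * t.card := by
          have : ∑ v ∈ t, (t.filter (fun u => A u v)).card ≤ ∑ _v ∈ t, d :=
            Finset.sum_le_sum hin
          rw [Finset.sum_const, smul_eq_mul, mul_comm] at this
          omega
      _ = 2 * d * t.card := by ring
  have hpos : 0 < t.card := Finset.card_pos.2 ht
  nlinarith

lemma aux_lowdeg_out (A : V → V → Prop) [DecidableRel A]
    [DecidableRel (underlying A).Adj] (t : Finset V) (ht : t.Nonempty) (d : ℕ)
    (hout : ∀ v ∈ t, (t.filter (fun u => A v u)).card ≤ d) :
    ∃ v ∈ t, (t.filter ((underlying A).Adj v)).card ≤ 2 * d := by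
  by_contra hcon
  push_neg at hcon
  have hsum : (2 * d + 1) * t.card ≤ ∑ v ∈ t, (t.filter ((underlying A).Adj v)).card := by
    calc (2 * d + 1) * t.card = ∑ _v ∈ t, (2 * d + 1) := by
          rw [Finset.sum_const, smul_eq_mul, mul_comm]
      _ ≤ _ := Finset.sum_le_sum (fun v hv => hcon v hv)
  have hsum2 : ∑ v ∈ t, (t.filter ((underlying A).Adj v)).card ≤ 2 * d * t.card := by
    calc ∑ v ∈ t, (t.filter ((underlying A).Adj v)).card
        ≤ ∑ v ∈ t, ((t.filter (fun u => A v u)).card + (t.filter (fun u => A u v)).card) :=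
          Finset.sum_le_sum (fun v _ => deg_le_in_add_out A t v)
      _ = ∑ v ∈ t, (t.filter (fun u => A v u)).card
            + ∑ v ∈ t, (t.filter (fun u => A v u)).card := by
          rw [Finset.sum_add_distrib, aux_sum_eq]
      _ ≤ d * t.card + d * t.card := by
          have : ∑ v ∈ t, (t.filter (fun u => A v u)).card ≤ ∑ _v ∈ t, d :=
            Finset.sum_le_sum hout
          rw [Finset.sum_const, smul_eq_mul, mul_comm] at this
          omega
      _ = 2 * d * t.card := by ring
  have hpos : 0 < t.card := Finset.card_pos.2 ht
  nlinarith

end Aux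

theorem stmt7 {V : Type*} [Fintype V] [DecidableEq V] (k ℓ : ℕ)
    (hk : 1 ≤ k) (hl : 1 ≤ ℓ)
    (A : V → V → Prop) (hasym : ∀ x y, A x y → ¬ A y x)
    (hC3 : ¬ ∃ u v w : V, A u v ∧ A v w ∧ A w u)
    (hTT3 : ¬ ∃ u v w : V, A u v ∧ A v w ∧ A u w)
    (hSkl : ¬ ∃ (x : V) (s t : Finset V), s.card = k ∧ t.card = ℓ ∧
      (∀ y ∈ s, A y x) ∧ (∀ y ∈ t, A x y) ∧
      (∀ y ∈ s ∪ t, ∀ z ∈ s ∪ t, y ≠ z → ¬ (underlying A).Adj y z)) :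
    (underlying A).chromaticNumber ≤ ((2 * k + 2 * ℓ - 2 : ℕ) : ℕ∞) := by
  classical
  -- neighbours of a common vertex are non-adjacent
  have hindep : ∀ a b x : V, A a b → (A a x ∨ A x a) → (A b x ∨ A x b) → False := by
    intro a b x hab ha hb
    rcases ha with ha | ha <;> rcases hb with hb | hb
    · exact hTT3 ⟨a, b, x, hab, hb, ha⟩
    · exact hTT3 ⟨a, x, b, ha, hb, hab⟩
    · exact hC3 ⟨x, a, b, ha, hab, hb⟩
    · exact hTT3 ⟨x, a, b, ha, hab, hb⟩
  -- every vertex has small in-degree or small out-degree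
  have hdich : ∀ v : V, (Finset.univ.filter (fun u => A u v)).card ≤ k - 1 ∨
      (Finset.univ.filter (fun u => A v u)).card ≤ ℓ - 1 := by
    intro v
    by_contra hcon
    push_neg at hcon
    obtain ⟨h1, h2⟩ := hcon
    have hk' : k ≤ (Finset.univ.filter (fun u => A u v)).card := by omega
    have hl' : ℓ ≤ (Finset.univ.filter (fun u => A v u)).card := by omega
    obtain ⟨s, hs, hscard⟩ := Finset.exists_subset_card_eq hk'
    obtain ⟨t, ht, htcard⟩ := Finset.exists_subset_card_eq hl'
    refine hSkl ⟨v, s, t, hscard, htcard, ?_, ?_, ?_⟩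
    · intro y hy
      have := hs hy; simpa using this
    · intro y hy
      have := ht hy; simpa using this
    · intro y hy z hz hyz hadj
      have hy' : A y v ∨ A v y := by
        rcases Finset.mem_union.1 hy with h | h
        · exact Or.inl (by simpa using hs h)
        · exact Or.inr (by simpa using ht h)
      have hz' : A z v ∨ A v z := by
        rcases Finset.mem_union.1 hz with h | h
        · exact Or.inl (by simpa using hs h)
        · exact Or.inr (by simpa using ht h)
      rcases hadj.2 with h | h
      · exact hindep y z v h hy' hz'
      · exact hindep z y v h hz' hy'
  -- split the vertex set
  set S : Finset V := Finset.univ.filter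
    (fun v => (Finset.univ.filter (fun u => A u v)).card ≤ k - 1) with hSdef
  -- coloring of S
  have hSdeg : ∀ t ⊆ S, t.Nonempty → ∃ v ∈ t,
      (t.filter ((underlying A).Adj v)).card ≤ 2 * (k - 1) := by
    intro t htS htne
    refine aux_lowdeg_in A t htne (k - 1) ?_
    intro v hv
    have hvS : v ∈ S := htS hv
    rw [hSdef, Finset.mem_filter] at hvS
    exact le_trans (Finset.card_le_card (Finset.filter_subset_filter _ (Finset.subset_univ t)))
      hvS.2
  -- coloring of the complement of S
  have hTdeg : ∀ t ⊆ Sᶜ, t.Nonempty → ∃ v ∈ t,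
      (t.filter ((underlying A).Adj v)).card ≤ 2 * (ℓ - 1) := by
    intro t htT htne
    refine aux_lowdeg_out A t htne (ℓ - 1) ?_
    intro v hv
    have hvT : v ∈ Sᶜ := htT hv
    rw [Finset.mem_compl, hSdef, Finset.mem_filter] at hvT
    have hv2 : ¬ (Finset.univ.filter (fun u => A u v)).card ≤ k - 1 := by
      intro h; exact hvT ⟨Finset.mem_univ v, h⟩
    have := (hdich v).resolve_left hv2
    exact le_trans (Finset.card_le_card (Finset.filter_subset_filter _ (Finset.subset_univ t)))
      this
  obtain ⟨c1, hc1a, hc1b⟩ := degeneracy_coloring (underlying A) (2 * (k - 1)) S hSdeg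
  obtain ⟨c2, hc2a, hc2b⟩ := degeneracy_coloring (underlying A) (2 * (ℓ - 1)) Sᶜ hTdeg
  -- combine
  have hcol : (underlying A).Colorable (2 * k + 2 * ℓ - 2) := by
    rw [SimpleGraph.colorable_iff_exists_bdd_nat_coloring]
    refine ⟨SimpleGraph.Coloring.mk
      (fun v => if v ∈ S then c1 v else (2 * k - 1) + c2 v) ?_, ?_⟩
    · intro x y hadj
      by_cases hx : x ∈ S <;> by_cases hy : y ∈ S <;> simp only [hx, hy, if_pos, if_neg,
        if_true, if_false]
      · exact hc1b x hx y hy hadj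
      · have : c1 x < 2 * (k - 1) + 1 := hc1a x hx
        omega
      · have : c1 y < 2 * (k - 1) + 1 := hc1a y hy
        omega
      · have hx' : x ∈ Sᶜ := Finset.mem_compl.2 hx
        have hy' : y ∈ Sᶜ := Finset.mem_compl.2 hy
        have := hc2b x hx' y hy' hadj
        omega
    · intro v
      show (if v ∈ S then c1 v else (2 * k - 1) + c2 v) < 2 * k + 2 * ℓ - 2
      by_cases hv : v ∈ S <;> simp only [hv, if_true, if_false]
      · have : c1 v < 2 * (k - 1) + 1 := hc1a v hv
        omega
      · have : c2 v < 2 * (ℓ - 1) + 1 := hc2a v (Finset.mem_compl.2 hv)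
        omega
  exact hcol.chromaticNumber_le
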